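/- arXiv:1204.5138 — 2 statements merged into one kernel-verified Lean document; each statement's English description precedes it below -/
import Mathlib

section
/- For every i, j ∈ {1,…,N} and every k ∈ {1,…,n−1}, the operator on V-valued rational functions given by pointwise application of L^+_{i,j}(u) (with u an extra indeterminate on which the symmetric group acts trivially) commutes with the operator s_k^+; similarly, pointwise application of L^−_{i,j}(u) commutes with s_k^−. -/
open scoped BigOperators

noncomputable section

namespace GRTV

/-- The field `ℂ(z_1,…,z_n,h,u)` of rational functions (with the extra indeterminate `u`). -/
abbrev K (n : ℕ) : Type := FractionRing (MvPolynomial (Fin n ⊕ Fin 2) ℂ)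

def z {n : ℕ} (i : Fin n) : K n :=
  algebraMap (MvPolynomial (Fin n ⊕ Fin 2) ℂ) (K n) (MvPolynomial.X (Sum.inl i))

def hvar {n : ℕ} : K n :=
  algebraMap (MvPolynomial (Fin n ⊕ Fin 2) ℂ) (K n) (MvPolynomial.X (Sum.inr 0))

def uvar {n : ℕ} : K n :=
  algebraMap (MvPolynomial (Fin n ⊕ Fin 2) ℂ) (K n) (MvPolynomial.X (Sum.inr 1))

/-- The field automorphism permuting the variables `z_i` by `σ` and fixing `h` and `u`. -/
def permK {n : ℕ} (σ : Equiv.Perm (Fin n)) : K n ≃+* K n :=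
  IsFractionRing.ringEquivOfRingEquiv
    (MvPolynomial.renameEquiv ℂ (Equiv.sumCongr σ (Equiv.refl (Fin 2)))).toRingEquiv

/-- `V ⊗ ℂ(z_1,…,z_n,h,u)` in coordinates. -/
abbrev VV (n N : ℕ) : Type := (Fin n → Fin N) → K n

/-- `ℂ^N ⊗ V` (coefficients in `ℂ(z,h,u)`) in coordinates. -/
abbrev W (n N : ℕ) : Type := (Fin N × (Fin n → Fin N)) → K n

def sign' {n : ℕ} (ε : Bool) : K n := if ε then hvar else -hvar

def fin1 {n : ℕ} (i : ℕ) (hi : i + 1 < n) : Fin n := ⟨i, Nat.lt_of_succ_lt hi⟩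
def fin2 {n : ℕ} (i : ℕ) (hi : i + 1 < n) : Fin n := ⟨i + 1, hi⟩

/-- The operator `s_i^±` (`ε = true` for `+`, `ε = false` for `−`). -/
def sOp {n N : ℕ} (ε : Bool) (i : ℕ) (hi : i + 1 < n) (f : VV n N) : VV n N :=
  fun m =>
    ((z (fin1 i hi) - z (fin2 i hi)) *
          permK (Equiv.swap (fin1 i hi) (fin2 i hi))
            (f (m ∘ ⇑(Equiv.swap (fin1 i hi) (fin2 i hi))))
        - sign' ε * permK (Equiv.swap (fin1 i hi) (fin2 i hi)) (f m))
      / (z (fin1 i hi) - z (fin2 i hi))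
    + sign' ε / (z (fin1 i hi) - z (fin2 i hi)) * f m

/-- The factor `(w − z_a + h P^{(0,a)})` acting on `ℂ^N ⊗ V`. -/
def fac0 {n N : ℕ} (w : K n) (a : Fin n) (f : W n N) : W n N :=
  fun x => (w - z a) * f x + hvar * f (x.2 a, Function.update x.2 a x.1)

/-- `L^±(w)`: `L^+(w) = (w−z_n+hP^{(0,n)})⋯(w−z_1+hP^{(0,1)})` and
`L^−(w) = (w−z_1+hP^{(0,1)})⋯(w−z_n+hP^{(0,n)})`. -/
def Lop {n N : ℕ} (ε : Bool) (w : K n) : W n N → W n N :=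
  if ε then (List.finRange n).foldl (fun g a => fac0 w a ∘ g) id
  else (List.finRange n).foldr (fun a g => fac0 w a ∘ g) id

/-- The matrix entry `L_{i,j}(u) ∈ End(V)`: `L_{i,j} v = π_i (L (e_j ⊗ v))`. -/
def entry {n N : ℕ} (L : W n N → W n N) (i j : Fin N) (v : VV n N) : VV n N :=
  fun m => L (fun x => if x.1 = j then v x.2 else 0) (i, m)
section Aux

variable {n N : ℕ}

lemma permK_algebraMap (σ : Equiv.Perm (Fin n)) (p : MvPolynomial (Fin n ⊕ Fin 2) ℂ) :
    permK σ (algebraMap (MvPolynomial (Fin n ⊕ Fin 2) ℂ) (K n) p)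
      = algebraMap (MvPolynomial (Fin n ⊕ Fin 2) ℂ) (K n)
          (MvPolynomial.rename (Equiv.sumCongr σ (Equiv.refl (Fin 2))) p) := by
  simp [permK, IsFractionRing.ringEquivOfRingEquiv_algebraMap]

@[simp] lemma permK_z (σ : Equiv.Perm (Fin n)) (i : Fin n) :
    permK σ (z i) = z (σ i) := by
  simp [z, permK_algebraMap]

@[simp] lemma permK_hvar (σ : Equiv.Perm (Fin n)) :
    permK σ (hvar : K n) = hvar := by
  simp [hvar, permK_algebraMap]

@[simp] lemma permK_uvar (σ : Equiv.Perm (Fin n)) :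
    permK σ (uvar : K n) = uvar := by
  simp [uvar, permK_algebraMap]

lemma z_injective : Function.Injective (z (n := n)) := by
  intro i j hij
  have h2 := IsFractionRing.injective (MvPolynomial (Fin n ⊕ Fin 2) ℂ) (K n) hij
  exact Sum.inl.inj (MvPolynomial.X_injective h2)

lemma zab_ne {a b : Fin n} (hab : a ≠ b) : z a - z b ≠ 0 :=
  sub_ne_zero.mpr fun h => hab (z_injective h)

end Aux
section Upd

variable {n N : ℕ}

/-- Double update at two fixed positions. -/
def upd2 (a b : Fin n) (m : Fin n → Fin N) (x y : Fin N) : Fin n → Fin N :=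
  Function.update (Function.update m a x) b y

variable {a b : Fin n}

lemma upd2_apply_a (hab : a ≠ b) (m : Fin n → Fin N) (x y : Fin N) : upd2 a b m x y a = x := by
  simp [upd2, Function.update_apply, hab]

lemma upd2_apply_b (m : Fin n → Fin N) (x y : Fin N) : upd2 a b m x y b = y := by
  simp [upd2]

lemma upd2_apply_far {c : Fin n} (hca : c ≠ a) (hcb : c ≠ b) (m : Fin n → Fin N)
    (x y : Fin N) : upd2 a b m x y c = m c := by
  simp [upd2, Function.update_apply, hca, hcb]

lemma upd2_upd2 (hab : a ≠ b) (m : Fin n → Fin N) (x y x' y' : Fin N) :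
    upd2 a b (upd2 a b m x y) x' y' = upd2 a b m x' y' := by
  funext c
  simp only [upd2, Function.update_apply]
  split_ifs <;> simp_all

lemma upd2_self (hab : a ≠ b) (m : Fin n → Fin N) : upd2 a b m (m a) (m b) = m := by
  funext c
  simp only [upd2, Function.update_apply]
  split_ifs <;> simp_all

lemma update_a_eq (hab : a ≠ b) (m : Fin n → Fin N) (x : Fin N) :
    Function.update m a x = upd2 a b m x (m b) := by
  funext c
  simp only [upd2, Function.update_apply]
  split_ifs <;> simp_all

lemma update_b_eq (hab : a ≠ b) (m : Fin n → Fin N) (y : Fin N) :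
    Function.update m b y = upd2 a b m (m a) y := by
  funext c
  simp only [upd2, Function.update_apply]
  split_ifs <;> simp_all

lemma update_upd2_far {c : Fin n} (hca : c ≠ a) (hcb : c ≠ b) (m : Fin n → Fin N)
    (x y p : Fin N) :
    Function.update (upd2 a b m x y) c p = upd2 a b (Function.update m c p) x y := by
  funext d
  simp only [upd2, Function.update_apply]
  split_ifs <;> simp_all

lemma comp_swap (hab : a ≠ b) (m : Fin n → Fin N) :
    m ∘ ⇑(Equiv.swap a b) = upd2 a b m (m b) (m a) := by
  funext c
  simp only [upd2, Function.comp_apply, Function.update_apply, Equiv.swap_apply_def]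
  split_ifs <;> simp_all

end Upd
section SWW

variable {n N : ℕ}

/-- The operator `s^±` lifted to `ℂ^N ⊗ V` (acting on the `V`-part only). -/
def SWW (ε : Bool) (a b : Fin n) (g : W n N) : W n N := fun x =>
  ((z a - z b) * permK (Equiv.swap a b) (g (x.1, x.2 ∘ ⇑(Equiv.swap a b)))
      - sign' ε * permK (Equiv.swap a b) (g x)) / (z a - z b)
    + sign' ε / (z a - z b) * g x

variable {a b : Fin n}

lemma far_comm (ε : Bool) (hab : a ≠ b) {c : Fin n} (hca : c ≠ a) (hcb : c ≠ b)
    (g : W n N) :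
    fac0 uvar c (SWW ε a b g) = SWW ε a b (fac0 uvar c g) := by
  funext x
  obtain ⟨p, m⟩ := x
  simp only [fac0, SWW, comp_swap hab, update_a_eq hab, update_b_eq hab,
    update_upd2_far hca hcb, upd2_upd2 hab, upd2_apply_a hab, upd2_apply_b,
    upd2_apply_far hca hcb, upd2_self hab, map_add, map_mul, map_sub, permK_z,
    permK_hvar, permK_uvar, Equiv.swap_apply_left, Equiv.swap_apply_right,
    Equiv.swap_apply_of_ne_of_ne hca hcb, Function.update_of_ne (Ne.symm hca),
    Function.update_of_ne (Ne.symm hcb), Function.update_self]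
  field_simp
  ring

end SWW
section Pair

variable {n N : ℕ} {a b : Fin n}

lemma pair_true (hab : a ≠ b) (g : W n N) :
    fac0 uvar b (fac0 uvar a (SWW true a b g)) =
      SWW true a b (fac0 uvar b (fac0 uvar a g)) := by
  funext x
  obtain ⟨p, m⟩ := x
  simp only [fac0, SWW, sign', if_true, comp_swap hab, update_a_eq hab, update_b_eq hab,
    upd2_upd2 hab, upd2_apply_a hab, upd2_apply_b, upd2_self hab, map_add, map_mul,
    map_sub, permK_z, permK_hvar, permK_uvar, Equiv.swap_apply_left,
    Equiv.swap_apply_right]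
  field_simp [zab_ne hab]
  ring

lemma pair_false (hab : a ≠ b) (g : W n N) :
    fac0 uvar a (fac0 uvar b (SWW false a b g)) =
      SWW false a b (fac0 uvar a (fac0 uvar b g)) := by
  funext x
  obtain ⟨p, m⟩ := x
  simp only [fac0, SWW, sign', if_false, Bool.false_eq_true, comp_swap hab, update_a_eq hab, update_b_eq hab,
    upd2_upd2 hab, upd2_apply_a hab, upd2_apply_b, upd2_self hab, map_add, map_mul,
    map_sub, map_neg, permK_z, permK_hvar, permK_uvar, Equiv.swap_apply_left,
    Equiv.swap_apply_right]
  field_simp [zab_ne hab]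
  ring

end Pair
section Fold

variable {n N : ℕ}

def Fold (w : K n) (l : List (Fin n)) : W n N → W n N :=
  l.foldl (fun g c => fac0 w c ∘ g) id

def FoldR (w : K n) (l : List (Fin n)) : W n N → W n N :=
  l.foldr (fun c g => fac0 w c ∘ g) id

lemma foldl_eq (w : K n) (l : List (Fin n)) (g0 : W n N → W n N) :
    l.foldl (fun g c => fac0 w c ∘ g) g0 = Fold w l ∘ g0 := by
  induction l generalizing g0 with
  | nil => rfl
  | cons c l ih =>
      show l.foldl _ (fac0 w c ∘ g0) = Fold w (c :: l) ∘ g0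
      rw [ih]
      have : Fold (N := N) w (c :: l) = Fold w l ∘ (fac0 w c ∘ id) := by
        show l.foldl _ (fac0 w c ∘ id) = _
        rw [ih]
      rw [this]
      rfl

lemma foldr_eq (w : K n) (l : List (Fin n)) (g0 : W n N → W n N) :
    l.foldr (fun c g => fac0 w c ∘ g) g0 = FoldR w l ∘ g0 := by
  induction l with
  | nil => rfl
  | cons c l ih =>
      show fac0 w c ∘ (l.foldr _ g0) = FoldR w (c :: l) ∘ g0
      rw [ih]
      rfl

variable {a b : Fin n}

lemma Fold_comm (ε : Bool) (hab : a ≠ b) (l : List (Fin n))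
    (hl : ∀ c ∈ l, c ≠ a ∧ c ≠ b) (g : W n N) :
    Fold uvar l (SWW ε a b g) = SWW ε a b (Fold uvar l g) := by
  induction l generalizing g with
  | nil => rfl
  | cons c l ih =>
      have hc := hl c (List.mem_cons_self (a := c) (l := l))
      have hl' : ∀ c ∈ l, c ≠ a ∧ c ≠ b := fun d hd => hl d (List.mem_cons_of_mem _ hd)
      show (l.foldl (fun g c => fac0 uvar c ∘ g) (fac0 uvar c ∘ id)) (SWW ε a b g) = _
      rw [foldl_eq]
      show Fold uvar l (fac0 uvar c (SWW ε a b g)) = _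
      rw [far_comm ε hab hc.1 hc.2, ih hl']
      have hcl : Fold (N := N) uvar (c :: l) g = Fold uvar l (fac0 uvar c g) := by
        show (l.foldl (fun g c => fac0 uvar c ∘ g) (fac0 uvar c ∘ id)) g = _
        rw [foldl_eq]
        rfl
      rw [hcl]

lemma FoldR_comm (ε : Bool) (hab : a ≠ b) (l : List (Fin n))
    (hl : ∀ c ∈ l, c ≠ a ∧ c ≠ b) (g : W n N) :
    FoldR uvar l (SWW ε a b g) = SWW ε a b (FoldR uvar l g) := by
  induction l generalizing g with
  | nil => rfl
  | cons c l ih =>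
      have hc := hl c (List.mem_cons_self (a := c) (l := l))
      have hl' : ∀ c ∈ l, c ≠ a ∧ c ≠ b := fun d hd => hl d (List.mem_cons_of_mem _ hd)
      show fac0 uvar c (FoldR uvar l (SWW ε a b g)) = _
      rw [ih hl', far_comm ε hab hc.1 hc.2]
      rfl

end Fold
section Main

variable {n N : ℕ}

lemma finRange_decomp (k : ℕ) (hk : k + 1 < n) :
    List.finRange n = (List.finRange n).take k
      ++ fin1 k hk :: fin2 k hk :: (List.finRange n).drop (k + 2) := by
  conv_lhs => rw [← List.take_append_drop k (List.finRange n)]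
  congr 1
  rw [List.drop_eq_getElem_cons (by simpa using by omega : k < (List.finRange n).length)]
  congr 1
  · simp [fin1]
  rw [show k + 1 + 1 = k + 2 by rfl] at *
  rw [List.drop_eq_getElem_cons (by simpa using by omega : k + 1 < (List.finRange n).length)]
  congr 1
  simp [fin2]

lemma mem_take_lt {k : ℕ} {c : Fin n} (hc : c ∈ (List.finRange n).take k) :
    (c : ℕ) < k := by
  obtain ⟨idx, hidx, rfl⟩ := List.mem_iff_getElem.mp hc
  have h1 : idx < k := lt_of_lt_of_le hidx (by simp)
  simp [List.getElem_take, h1]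

lemma mem_drop_ge {k : ℕ} {c : Fin n} (hc : c ∈ (List.finRange n).drop k) :
    k ≤ (c : ℕ) := by
  obtain ⟨idx, hidx, rfl⟩ := List.mem_iff_getElem.mp hc
  simp [List.getElem_drop]

lemma SWW_Lop (ε : Bool) (k : ℕ) (hk : k + 1 < n) (g : W n N) :
    SWW ε (fin1 k hk) (fin2 k hk) (Lop ε uvar g) =
      Lop ε uvar (SWW ε (fin1 k hk) (fin2 k hk) g) := by
  set a := fin1 k hk with ha
  set b := fin2 k hk with hb
  have hab : a ≠ b := by simp [ha, hb, fin1, fin2, Fin.ext_iff]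
  set l₁ := (List.finRange n).take k with hl₁
  set l₂ := (List.finRange n).drop (k + 2) with hl₂
  have hl₁' : ∀ c ∈ l₁, c ≠ a ∧ c ≠ b := by
    intro c hc
    have := mem_take_lt hc
    constructor <;> (intro h; subst h; simp only [ha, hb, fin1, fin2] at this; omega)
  have hl₂' : ∀ c ∈ l₂, c ≠ a ∧ c ≠ b := by
    intro c hc
    have := mem_drop_ge hc
    constructor <;> (intro h; subst h; simp only [ha, hb, fin1, fin2] at this; omega)
  cases ε with
  | true =>
      have hLop : (Lop true uvar : W n N → W n N) =
          fun g => Fold uvar l₂ (fac0 uvar b (fac0 uvar a (Fold uvar l₁ g))) := by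
        funext g
        show (List.finRange n).foldl (fun g c => fac0 uvar c ∘ g) id g = _
        rw [finRange_decomp k hk, List.foldl_append, List.foldl_cons, List.foldl_cons,
          foldl_eq, foldl_eq]
        rfl
      rw [hLop]
      rw [← Fold_comm true hab l₂ hl₂', ← pair_true hab, ← Fold_comm true hab l₁ hl₁']
  | false =>
      have hLop : (Lop false uvar : W n N → W n N) =
          fun g => FoldR uvar l₁ (fac0 uvar a (fac0 uvar b (FoldR uvar l₂ g))) := by
        funext g
        show (List.finRange n).foldr (fun c g => fac0 uvar c ∘ g) id g = _
        rw [finRange_decomp k hk, List.foldr_append, List.foldr_cons, List.foldr_cons,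
          foldr_eq]
        rfl
      rw [hLop]
      rw [← FoldR_comm false hab l₁ hl₁', ← pair_false hab, ← FoldR_comm false hab l₂ hl₂']

end Main
section Final

variable {n N : ℕ}

lemma ext_sOp (ε : Bool) (k : ℕ) (hk : k + 1 < n) (j : Fin N) (f : VV n N) :
    (fun x : Fin N × (Fin n → Fin N) => if x.1 = j then sOp ε k hk f x.2 else 0)
      = SWW ε (fin1 k hk) (fin2 k hk)
          (fun x : Fin N × (Fin n → Fin N) => if x.1 = j then f x.2 else 0) := by
  funext x
  obtain ⟨p, m⟩ := x
  by_cases hp : p = j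
  · simp only [SWW, sOp, hp, if_true]
  · simp [SWW, hp]

end Final

/-- pointwise application of the matrix entry `L^±_{i,j}(u)` commutes with
the operator `s_k^±` (the symmetric group acting trivially on `u`). -/
theorem statement13 (n N : ℕ) (ε : Bool) (i j : Fin N) (k : ℕ) (hk : k + 1 < n)
    (f : VV n N) :
    sOp ε k hk (entry (Lop ε uvar) i j f) = entry (Lop ε uvar) i j (sOp ε k hk f) := by
  have key := SWW_Lop (N := N) ε k hk (fun x => if x.1 = j then f x.2 else 0)
  calc sOp ε k hk (entry (Lop ε uvar) i j f)
      = fun m => SWW ε (fin1 k hk) (fin2 k hk)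
          (Lop ε uvar (fun x => if x.1 = j then f x.2 else 0)) (i, m) := rfl
    _ = fun m => Lop ε uvar (SWW ε (fin1 k hk) (fin2 k hk)
          (fun x => if x.1 = j then f x.2 else 0)) (i, m) := by rw [key]
    _ = entry (Lop ε uvar) i j (sOp ε k hk f) := by
        show _ = fun m => Lop ε uvar
          (fun x : Fin N × (Fin n → Fin N) => if x.1 = j then sOp ε k hk f x.2 else 0) (i, m)
        rw [ext_sOp]
end GRTV
end
end

section
/- Let κ_1,…,κ_n be pairwise distinct. Then Ŵ^κ(u,x) = det( (u·1 − C)(x·1 − Q) − hQ ) · ∏_{1≤i<j≤n}(κ_i − κ_j), where Q = diag(κ_1,…,κ_n) and C is the trigonometric Calogero–Moser matrix. -/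
open scoped BigOperators

noncomputable section

namespace GRTV

/-- The `(n+1) × (n+1)` determinant `Ŵ^κ(u,x)`: rows and columns are indexed by
`0,…,n`; the `(0,j)` entry is `x^{n−j}` and for `i ≥ 1` the `(i,j)` entry is
`κ_i^{n−j} (u − x_i + h(i−j))`. -/
def What (n : ℕ) (κ xv : Fin n → ℂ) (h u x : ℂ) : Matrix (Fin (n+1)) (Fin (n+1)) ℂ :=
  Matrix.of fun i j =>
    if hi : (i : ℕ) = 0 then x ^ (n - (j : ℕ))
    else
      κ (⟨(i : ℕ) - 1, by omega⟩ : Fin n) ^ (n - (j : ℕ)) *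
        (u - xv (⟨(i : ℕ) - 1, by omega⟩ : Fin n)
          + h * (((i : ℕ) : ℂ) - ((j : ℕ) : ℂ)))

/-- The trigonometric Calogero–Moser matrix `C`. -/
def CM (n : ℕ) (κ xv : Fin n → ℂ) (h : ℂ) : Matrix (Fin n) (Fin n) ℂ :=
  Matrix.of fun i j =>
    if i = j then
      xv i - h * (∑ k ∈ Finset.univ.filter (fun k : Fin n => k < i), κ i / (κ i - κ k))
          - h * (∑ k ∈ Finset.univ.filter (fun k : Fin n => i < k), κ k / (κ i - κ k))
    else h * κ i / (κ i - κ j)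



open Matrix Finset Polynomial

/-- `Δ_i = ∏_{t ≠ i} (κ_i - κ_t)`. -/
def dd (n : ℕ) (κ : Fin n → ℂ) (i : Fin n) : ℂ := ∏ t ∈ Finset.univ.erase i, (κ i - κ t)

lemma dd_ne_zero {n : ℕ} {κ : Fin n → ℂ} (hκ : Function.Injective κ) (i : Fin n) :
    dd n κ i ≠ 0 := by
  rw [dd, Finset.prod_ne_zero_iff]
  intro t ht
  have : t ≠ i := (Finset.mem_erase.mp ht).1
  exact sub_ne_zero.mpr (fun hh => this (hκ hh.symm))

/-- matrix of the operator `p ↦ t p'` in the node basis. -/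
def EE (n : ℕ) (κ : Fin n → ℂ) : Matrix (Fin n) (Fin n) ℂ :=
  Matrix.of fun i k =>
    if i = k then ∑ t ∈ Finset.univ.erase i, κ i / (κ i - κ t)
    else κ i * dd n κ i / ((κ i - κ k) * dd n κ k)

lemma derivative_finset_prod {ι : Type*} [DecidableEq ι] (s : Finset ι) (f : ι → ℂ[X]) :
    derivative (∏ j ∈ s, f j) = ∑ t ∈ s, (∏ j ∈ s.erase t, f j) * derivative (f t) := by
  induction s using Finset.induction_on with
  | empty => simp
  | @insert a s ha ih =>
      rw [Finset.prod_insert ha, derivative_mul, ih, Finset.mul_sum, Finset.sum_insert ha,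
        Finset.erase_insert ha]
      congr 1
      · exact mul_comm _ _
      · refine Finset.sum_congr rfl fun t ht => ?_
        rw [Finset.erase_insert_of_ne (by rintro rfl; exact ha ht), Finset.prod_insert
          (fun h => ha (Finset.mem_of_mem_erase h))]
        ring

lemma derivative_basisDivisor (a b : ℂ) :
    derivative (Lagrange.basisDivisor a b) = C ((a - b)⁻¹) := by
  rw [Lagrange.basisDivisor]
  simp

lemma eval_basisDivisor (z a b : ℂ) :
    eval z (Lagrange.basisDivisor a b) = (a - b)⁻¹ * (z - b) := by
  rw [Lagrange.basisDivisor]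
  simp

lemma evalDB {n : ℕ} {κ : Fin n → ℂ} (hκ : Function.Injective κ) (i k : Fin n) :
    eval (κ i) (derivative (Lagrange.basis Finset.univ κ k)) =
      if i = k then ∑ t ∈ Finset.univ.erase i, (κ i - κ t)⁻¹
      else dd n κ i / ((κ i - κ k) * dd n κ k) := by
  have hne : ∀ {a b : Fin n}, a ≠ b → κ a ≠ κ b := fun h hh => h (hκ hh)
  rw [Lagrange.basis, derivative_finset_prod, eval_finset_sum]
  by_cases hik : i = k
  · subst hik
    rw [if_pos rfl]
    refine Finset.sum_congr rfl fun t ht => ?_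
    have htne : t ≠ i := (Finset.mem_erase.mp ht).1
    rw [eval_mul, derivative_basisDivisor, eval_C, eval_prod]
    rw [Finset.prod_congr rfl (fun j hj => ?_), Finset.prod_const_one, one_mul]
    · have hjne : j ≠ i := (Finset.mem_erase.mp (Finset.mem_of_mem_erase hj)).1
      exact Lagrange.eval_basisDivisor_left_of_ne (hne (Ne.symm hjne))
  · rw [if_neg hik]
    have hik' : i ∈ Finset.univ.erase k := Finset.mem_erase.mpr ⟨hik, Finset.mem_univ i⟩
    rw [Finset.sum_eq_single_of_mem i hik' ?side]
    case side =>
      intro t ht hti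
      have htk : t ≠ k := (Finset.mem_erase.mp ht).1
      have hmem : i ∈ (Finset.univ.erase k).erase t :=
        Finset.mem_erase.mpr ⟨Ne.symm hti, hik'⟩
      rw [eval_mul, eval_prod, Finset.prod_eq_zero hmem, zero_mul]
      exact Lagrange.eval_basisDivisor_right
    -- main term
    rw [eval_mul, derivative_basisDivisor, eval_C, eval_prod]
    have hsplit : ∀ j ∈ (Finset.univ.erase k).erase i,
        eval (κ i) (Lagrange.basisDivisor (κ k) (κ j)) = (κ k - κ j)⁻¹ * (κ i - κ j) := by
      intro j hj
      exact eval_basisDivisor _ _ _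
    rw [Finset.prod_congr rfl hsplit, Finset.prod_mul_distrib]
    -- now pure algebra
    have hdi : dd n κ i = (κ i - κ k) * ∏ j ∈ (Finset.univ.erase k).erase i, (κ i - κ j) := by
      rw [dd, Finset.erase_right_comm]
      exact (Finset.mul_prod_erase _ _ (Finset.mem_erase.mpr ⟨Ne.symm hik, Finset.mem_univ k⟩)).symm
    have hdk : dd n κ k = (κ k - κ i) * ∏ j ∈ (Finset.univ.erase k).erase i, (κ k - κ j) := by
      rw [dd]
      exact (Finset.mul_prod_erase _ _ hik').symm
    rw [hdi, hdk]
    have h1 : (κ i - κ k) ≠ 0 := sub_ne_zero.mpr (hne hik)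
    have h2 : (κ k - κ i) ≠ 0 := sub_ne_zero.mpr (hne (Ne.symm hik))
    have h3 : (∏ j ∈ (Finset.univ.erase k).erase i, (κ k - κ j)) ≠ 0 := by
      rw [Finset.prod_ne_zero_iff]
      intro j hj
      exact sub_ne_zero.mpr (hne (Ne.symm (Finset.mem_erase.mp (Finset.mem_of_mem_erase hj)).1))
    rw [Finset.prod_inv_distrib]
    field_simp

lemma keyE {n : ℕ} {κ : Fin n → ℂ} (hκ : Function.Injective κ) (i : Fin n) (m : ℕ)
    (hm : m < n) : ∑ k, EE n κ i k * κ k ^ m = (m : ℂ) * κ i ^ m := by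
  have hinj : Set.InjOn κ (Finset.univ : Finset (Fin n)) := fun a _ b _ hab => hκ hab
  have hdeg : (X ^ m : ℂ[X]).degree < (Finset.univ : Finset (Fin n)).card := by
    rw [degree_X_pow, Finset.card_univ, Fintype.card_fin]
    exact_mod_cast hm
  have hint : (X ^ m : ℂ[X]) = ∑ k, C (κ k ^ m) * Lagrange.basis Finset.univ κ k := by
    have h := Lagrange.eq_interpolate hinj hdeg
    simpa [Lagrange.interpolate_apply] using h
  have hd := congrArg (fun p : ℂ[X] => eval (κ i) (derivative p)) hint
  simp only [derivative_X_pow, derivative_sum, derivative_C_mul, eval_mul, eval_C, eval_pow,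
    eval_X, eval_finset_sum, eval_natCast, eval_mul] at hd
  -- hd : (m:ℂ) * κ i ^ (m-1) = ∑ k, κ k ^ m * eval (κ i) (derivative (basis univ κ k))
  have hEE : ∀ k, EE n κ i k = κ i * eval (κ i) (derivative (Lagrange.basis Finset.univ κ k)) := by
    intro k
    rw [evalDB hκ i k, EE]
    by_cases hik : i = k
    · subst hik
      simp [Finset.mul_sum, div_eq_mul_inv]
    · simp [hik, mul_div_assoc]
  calc ∑ k, EE n κ i k * κ k ^ m
      = κ i * ∑ k, κ k ^ m * eval (κ i) (derivative (Lagrange.basis Finset.univ κ k)) := by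
        rw [Finset.mul_sum]
        exact Finset.sum_congr rfl fun k _ => by rw [hEE k]; ring
    _ = κ i * ((m : ℂ) * κ i ^ (m - 1)) := by rw [← hd]
    _ = (m : ℂ) * κ i ^ m := by
        cases m with
        | zero => simp
        | succ s => rw [Nat.add_sub_cancel, pow_succ]; ring



/-- reversed Vandermonde determinant -/
lemma vrev_det (n : ℕ) (κ : Fin n → ℂ) :
    (Matrix.of fun i j : Fin n => κ i ^ (n - 1 - (j : ℕ))).det =
      ∏ p ∈ Finset.univ.filter (fun p : Fin n × Fin n => p.1 < p.2), (κ p.1 - κ p.2) := by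
  have h1 : (Matrix.of fun i j : Fin n => κ i ^ (n - 1 - (j : ℕ)))
      = (Matrix.vandermonde (fun i => κ (Fin.rev i))).submatrix
          (Fin.revPerm : Fin n ≃ Fin n) Fin.revPerm := by
    ext i j
    simp only [Matrix.of_apply, Matrix.submatrix_apply, Matrix.vandermonde_apply,
      Fin.revPerm_apply, Fin.rev_rev]
    rw [Fin.val_rev]
    congr 1
    omega
  rw [h1, Matrix.det_submatrix_equiv_self, Matrix.det_vandermonde]
  rw [Finset.prod_sigma']
  refine Finset.prod_nbij' (fun p => (Fin.rev p.2, Fin.rev p.1))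
    (fun p => ⟨Fin.rev p.2, Fin.rev p.1⟩) ?_ ?_ ?_ ?_ ?_
  · intro a ha
    simp only [Finset.mem_sigma, Finset.mem_univ, Finset.mem_Ioi, true_and] at ha
    simp only [Finset.mem_filter, Finset.mem_univ, true_and]
    exact Fin.rev_lt_rev.mpr ha
  · intro a ha
    simp only [Finset.mem_filter, Finset.mem_univ, true_and] at ha
    simp only [Finset.mem_sigma, Finset.mem_univ, Finset.mem_Ioi, true_and]
    exact Fin.rev_lt_rev.mpr ha
  · intro a _; simp [Fin.rev_rev]
  · intro a _; simp [Fin.rev_rev]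
  · intro a _; rfl

def bb (n : ℕ) (xv : Fin n → ℂ) (h u : ℂ) (i : Fin n) : ℂ :=
  u - xv i + h * (((i : ℕ) : ℂ) + 2 - (n : ℂ))

def BB (n : ℕ) (κ xv : Fin n → ℂ) (h u : ℂ) : Matrix (Fin n) (Fin n) ℂ :=
  Matrix.of fun i j => (if i = j then bb n xv h u i else 0) + h * EE n κ i j

/-- the transpose of `hx·1 − (x−Q)B`. -/
def HT (n : ℕ) (κ xv : Fin n → ℂ) (h u x : ℂ) : Matrix (Fin n) (Fin n) ℂ :=
  Matrix.of fun i j => (if i = j then h * x else 0) - BB n κ xv h u j i * (x - κ j)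

/-- column operation matrix -/
def TT (n : ℕ) (x : ℂ) : Matrix (Fin (n+1)) (Fin (n+1)) ℂ :=
  Matrix.of fun k j => (if k = j then 1 else 0) + (if (k : ℕ) = (j : ℕ) + 1 then -x else 0)

lemma det_TT (n : ℕ) (x : ℂ) : (TT n x).det = 1 := by
  have hlow : (TT n x).BlockTriangular OrderDual.toDual := by
    intro i j hij
    have h1 : i < j := hij
    have h1' : (i : ℕ) < (j : ℕ) := h1
    have hne : ¬ (i = j) := ne_of_lt h1
    have h2 : ¬ ((i : ℕ) = (j : ℕ) + 1) := by omega
    simp [TT, hne, h2]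
  rw [Matrix.det_of_lowerTriangular (TT n x) hlow]
  refine Finset.prod_eq_one fun i _ => ?_
  simp [TT]

lemma mulTT_lt {n : ℕ} (x : ℂ) (W : Matrix (Fin (n+1)) (Fin (n+1)) ℂ) (r : Fin (n+1))
    (j : Fin (n+1)) (hj : (j : ℕ) < n) :
    (W * TT n x) r j = W r j - x * W r ⟨(j : ℕ) + 1, by omega⟩ := by
  rw [Matrix.mul_apply]
  simp only [TT, Matrix.of_apply, mul_add, mul_ite, mul_one, mul_zero]
  rw [Finset.sum_add_distrib, Finset.sum_ite_eq' Finset.univ j, if_pos (Finset.mem_univ _)]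
  congr 1
  rw [Finset.sum_eq_single (⟨(j : ℕ) + 1, by omega⟩ : Fin (n+1))]
  · rw [if_pos rfl]; ring
  · intro k _ hk
    rw [if_neg]
    intro hh
    exact hk (Fin.ext hh)
  · intro hmem; exact absurd (Finset.mem_univ _) hmem

lemma mulTT_last {n : ℕ} (x : ℂ) (W : Matrix (Fin (n+1)) (Fin (n+1)) ℂ) (r : Fin (n+1)) :
    (W * TT n x) r (Fin.last n) = W r (Fin.last n) := by
  rw [Matrix.mul_apply]
  simp only [TT, Matrix.of_apply, mul_add, mul_ite, mul_one, mul_zero]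
  rw [Finset.sum_add_distrib, Finset.sum_ite_eq' Finset.univ (Fin.last n), if_pos
    (Finset.mem_univ _)]
  have : ∀ k : Fin (n+1), (if (k : ℕ) = ((Fin.last n : Fin (n+1)) : ℕ) + 1 then W r k * -x else 0) = 0 := by
    intro k
    rw [if_neg]
    simp only [Fin.val_last]
    omega
  rw [Finset.sum_congr rfl fun k _ => this k, Finset.sum_const_zero, add_zero]

lemma What_succ (n : ℕ) (κ xv : Fin n → ℂ) (h u x : ℂ) (i : Fin n) (c : Fin (n+1)) :
    What n κ xv h u x (Fin.succ i) c =
      κ i ^ (n - (c : ℕ)) * (u - xv i + h * (((i : ℕ) : ℂ) + 1 - ((c : ℕ) : ℂ))) := by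
  simp only [What, Matrix.of_apply, Fin.val_succ]
  rw [dif_neg (Nat.succ_ne_zero _)]
  have hidx : (⟨(i : ℕ) + 1 - 1, by omega⟩ : Fin n) = i := Fin.ext (by simp)
  rw [hidx]
  push_cast
  ring_nf

lemma What_zero (n : ℕ) (κ xv : Fin n → ℂ) (h u x : ℂ) (c : Fin (n+1)) :
    What n κ xv h u x 0 c = x ^ (n - (c : ℕ)) := by
  simp [What]

lemma HTsum (n : ℕ) (κ xv : Fin n → ℂ) (h u x : ℂ) (hκ : Function.Injective κ)
    (i : Fin n) (m : ℕ) (hm : m < n) :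
    ∑ k, HT n κ xv h u x k i * κ k ^ m =
      h * x * κ i ^ m - (x - κ i) * ((bb n xv h u i + h * (m : ℂ)) * κ i ^ m) := by
  have hBB : ∑ k, BB n κ xv h u i k * κ k ^ m = (bb n xv h u i + h * (m : ℂ)) * κ i ^ m := by
    simp only [BB, Matrix.of_apply, add_mul, ite_mul, zero_mul]
    rw [Finset.sum_add_distrib, Finset.sum_ite_eq Finset.univ i, if_pos (Finset.mem_univ _)]
    have : ∑ k, h * EE n κ i k * κ k ^ m = h * ∑ k, EE n κ i k * κ k ^ m := by
      rw [Finset.mul_sum]; exact Finset.sum_congr rfl fun k _ => by ring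
    rw [this, keyE hκ i m hm]
    ring
  simp only [HT, Matrix.of_apply, sub_mul, ite_mul, zero_mul]
  rw [Finset.sum_sub_distrib, Finset.sum_ite_eq' Finset.univ i, if_pos (Finset.mem_univ _)]
  have : ∑ k, BB n κ xv h u i k * (x - κ i) * κ k ^ m
      = (x - κ i) * ∑ k, BB n κ xv h u i k * κ k ^ m := by
    rw [Finset.mul_sum]; exact Finset.sum_congr rfl fun k _ => by ring
  rw [this, hBB]
  ring

lemma what_det (n : ℕ) (κ xv : Fin n → ℂ) (h u x : ℂ) (hκ : Function.Injective κ) :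
    (What n κ xv h u x).det = (-1 : ℂ) ^ n * (HT n κ xv h u x).det *
      ∏ p ∈ Finset.univ.filter (fun p : Fin n × Fin n => p.1 < p.2), (κ p.1 - κ p.2) := by
  have hdet : (What n κ xv h u x).det = ((What n κ xv h u x) * TT n x).det := by
    rw [Matrix.det_mul, det_TT, mul_one]
  rw [hdet, Matrix.det_succ_row_zero]
  rw [Finset.sum_eq_single_of_mem (Fin.last n) (Finset.mem_univ _)]
  · -- main term
    rw [mulTT_last, What_zero, Fin.val_last, Nat.sub_self, pow_zero, mul_one]
    have hsub : ((What n κ xv h u x) * TT n x).submatrix Fin.succ ((Fin.last n).succAbove)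
        = (HT n κ xv h u x).transpose * (Matrix.of fun i j : Fin n => κ i ^ (n - 1 - (j : ℕ))) := by
      rw [Fin.succAbove_last]
      ext i j
      have hjlt : ((Fin.castSucc j : Fin (n+1)) : ℕ) < n := by simp [Fin.is_lt]
      rw [Matrix.submatrix_apply, mulTT_lt _ _ _ _ hjlt, Matrix.mul_apply]
      have hRHS : ∑ k, (HT n κ xv h u x).transpose i k *
          (Matrix.of fun i j : Fin n => κ i ^ (n - 1 - (j : ℕ))) k j
          = ∑ k, HT n κ xv h u x k i * κ k ^ (n - 1 - (j : ℕ)) := by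
        exact Finset.sum_congr rfl fun k _ => by rw [Matrix.transpose_apply, Matrix.of_apply]
      rw [hRHS, HTsum n κ xv h u x hκ i _ (by omega : n - 1 - (j : ℕ) < n)]
      rw [What_succ, What_succ]
      simp only [Fin.coe_castSucc, Fin.val_mk]
      have e2 : n - (j : ℕ) = (n - 1 - (j : ℕ)) + 1 := by omega
      have e3 : n - ((j : ℕ) + 1) = n - 1 - (j : ℕ) := by omega
      rw [e2, e3, pow_succ]
      have e4 : ((n - 1 - (j : ℕ) : ℕ) : ℂ) = (n : ℂ) - 1 - ((j : ℕ) : ℂ) := by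
        have h1 : (j : ℕ) < n := j.is_lt
        push_cast [Nat.cast_sub (by omega : (j:ℕ) ≤ n - 1), Nat.cast_sub (by omega : 1 ≤ n)]
        ring
      rw [e4, bb]
      push_cast
      ring
    rw [hsub, Matrix.det_mul, Matrix.det_transpose, vrev_det]
    ring
  · intro j _ hj
    have hjlt : (j : ℕ) < n := by
      have h1 : (j : ℕ) < n + 1 := j.is_lt
      have h2 : (j : ℕ) ≠ n := fun hh => hj (by apply Fin.ext; simp [hh, Fin.val_last])
      omega
    rw [mulTT_lt _ _ _ _ hjlt, What_zero, What_zero]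
    have : x ^ (n - (j : ℕ)) - x * x ^ (n - ((j:ℕ)+1)) = 0 := by
      have e2 : n - (j : ℕ) = (n - ((j : ℕ) + 1)) + 1 := by omega
      rw [e2, pow_succ]
      ring
    simp only [Fin.val_mk] at this ⊢
    rw [this]
    ring



def cc (n : ℕ) (κ : Fin n → ℂ) (i : Fin n) : ℂ := κ i * dd n κ i

lemma sum_erase_split {n : ℕ} (i : Fin n) (f : Fin n → ℂ) :
    ∑ t ∈ Finset.univ.erase i, f t =
      (∑ t ∈ Finset.univ.filter (fun k : Fin n => k < i), f t) +
      (∑ t ∈ Finset.univ.filter (fun k : Fin n => i < k), f t) := by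
  rw [← Finset.sum_union]
  · congr 1
    ext k
    simp only [Finset.mem_erase, Finset.mem_univ, and_true, Finset.mem_union, Finset.mem_filter,
      true_and]
    constructor
    · intro hk; exact lt_or_gt_of_ne hk
    · intro hk; rcases hk with hk | hk
      · exact ne_of_lt hk
      · exact ne_of_gt hk
  · rw [Finset.disjoint_filter]
    intro k _ h1 h2
    exact absurd (lt_trans h1 h2) (lt_irrefl _)

lemma card_filter_gt {n : ℕ} (i : Fin n) :
    (Finset.univ.filter (fun k : Fin n => i < k)).card = n - 1 - (i : ℕ) := by
  have : Finset.univ.filter (fun k : Fin n => i < k) = Finset.Ioi i := by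
    ext k; simp
  rw [this, Fin.card_Ioi]

lemma diagid {n : ℕ} {κ : Fin n → ℂ} (xv : Fin n → ℂ) (h u : ℂ)
    (hκ : Function.Injective κ) (i : Fin n) :
    BB n κ xv h u i i = (u + h) - CM n κ xv h i i := by
  have hne : ∀ {a b : Fin n}, a ≠ b → κ a - κ b ≠ 0 :=
    fun hab => sub_ne_zero.mpr (fun hh => hab (hκ hh))
  have hterm : ∀ k ∈ Finset.univ.filter (fun k : Fin n => i < k),
      κ i / (κ i - κ k) = κ k / (κ i - κ k) + 1 := by
    intro k hk
    have hik : i ≠ k := ne_of_lt (Finset.mem_filter.mp hk).2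
    have hd : κ i - κ k ≠ 0 := hne hik
    field_simp
    ring
  have hkey : ∑ k ∈ Finset.univ.filter (fun k : Fin n => i < k), κ i / (κ i - κ k)
      = (∑ k ∈ Finset.univ.filter (fun k : Fin n => i < k), κ k / (κ i - κ k))
        + ((n : ℂ) - 1 - ((i : ℕ) : ℂ)) := by
    rw [Finset.sum_congr rfl hterm, Finset.sum_add_distrib, Finset.sum_const, nsmul_eq_mul,
      mul_one, card_filter_gt]
    congr 1
    have h1 : (i : ℕ) < n := i.is_lt
    push_cast [Nat.cast_sub (by omega : (i : ℕ) ≤ n - 1), Nat.cast_sub (by omega : 1 ≤ n)]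
    ring
  simp only [BB, CM, EE, Matrix.of_apply, eq_self_iff_true, if_true]
  rw [sum_erase_split i (fun t => κ i / (κ i - κ t)), hkey, bb]
  ring

lemma ccBB {n : ℕ} {κ : Fin n → ℂ} (xv : Fin n → ℂ) (h u : ℂ)
    (hκ : Function.Injective κ) (i j : Fin n) :
    cc n κ i * BB n κ xv h u j i =
      ((if i = j then u + h else 0) - CM n κ xv h i j) * cc n κ j := by
  have hne : ∀ {a b : Fin n}, a ≠ b → κ a - κ b ≠ 0 :=
    fun hab => sub_ne_zero.mpr (fun hh => hab (hκ hh))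
  by_cases hij : i = j
  · subst hij
    rw [if_pos rfl, ← diagid xv h u hκ i]
    ring
  · rw [if_neg hij]
    have hji : j ≠ i := Ne.symm hij
    simp only [BB, CM, EE, Matrix.of_apply, if_neg hji, if_neg hij, cc]
    have h1 : dd n κ i ≠ 0 := dd_ne_zero hκ i
    have h2 : dd n κ j ≠ 0 := dd_ne_zero hκ j
    have h3 : κ j - κ i ≠ 0 := hne hji
    have h4 : κ i - κ j ≠ 0 := hne hij
    field_simp
    ring

lemma Mentry (n : ℕ) (κ xv : Fin n → ℂ) (h u x : ℂ) (i j : Fin n) :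
    ((u • (1 : Matrix (Fin n) (Fin n) ℂ) - CM n κ xv h) *
        (x • (1 : Matrix (Fin n) (Fin n) ℂ) - Matrix.diagonal κ)
      - h • Matrix.diagonal κ) i j =
    ((if i = j then u else 0) - CM n κ xv h i j) * (x - κ j) - (if i = j then h * κ j else 0) := by
  have hdiag : x • (1 : Matrix (Fin n) (Fin n) ℂ) - Matrix.diagonal κ
      = Matrix.diagonal (fun t => x - κ t) := by
    ext a b
    by_cases hab : a = b
    · subst hab; simp [Matrix.one_apply, Matrix.diagonal_apply]
    · simp [Matrix.one_apply, Matrix.diagonal_apply, hab]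
  rw [hdiag]
  rw [Matrix.sub_apply, Matrix.mul_diagonal, Matrix.sub_apply, Matrix.smul_apply,
    Matrix.one_apply, Matrix.smul_apply, Matrix.diagonal_apply]
  by_cases hij : i = j
  · subst hij; simp
  · simp [hij]

lemma keydet0 (n : ℕ) (κ xv : Fin n → ℂ) (h u x : ℂ) (hκ : Function.Injective κ)
    (hκ0 : ∀ i, κ i ≠ 0) :
    (HT n κ xv h u x).det = (-1 : ℂ) ^ n *
      ((u • (1 : Matrix (Fin n) (Fin n) ℂ) - CM n κ xv h) *
          (x • (1 : Matrix (Fin n) (Fin n) ℂ) - Matrix.diagonal κ)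
        - h • Matrix.diagonal κ).det := by
  set Y : Matrix (Fin n) (Fin n) ℂ := Matrix.of fun i j =>
    (if i = j then h * x else 0) - ((if i = j then u + h else 0) - CM n κ xv h i j) * (x - κ j)
    with hY
  have step1 : Matrix.diagonal (cc n κ) * HT n κ xv h u x = Y * Matrix.diagonal (cc n κ) := by
    ext i j
    rw [Matrix.diagonal_mul, Matrix.mul_diagonal]
    simp only [HT, Matrix.of_apply, hY]
    have hBB := ccBB xv h u hκ i j
    by_cases hij : i = j
    · subst hij
      simp only [eq_self_iff_true, if_true] at hBB ⊢
      linear_combination (-(x - κ i)) * hBB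
    · simp only [if_neg hij] at hBB ⊢
      linear_combination (-(x - κ j)) * hBB
  have hccne : (Matrix.diagonal (cc n κ)).det ≠ 0 := by
    rw [Matrix.det_diagonal]
    rw [Finset.prod_ne_zero_iff]
    intro i _
    exact mul_ne_zero (hκ0 i) (dd_ne_zero hκ i)
  have step2 : (HT n κ xv h u x).det = Y.det := by
    have hcd := congrArg Matrix.det step1
    rw [Matrix.det_mul, Matrix.det_mul] at hcd
    exact mul_left_cancel₀ hccne (hcd.trans (mul_comm _ _))
  have step3 : Y = -((u • (1 : Matrix (Fin n) (Fin n) ℂ) - CM n κ xv h) *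
      (x • (1 : Matrix (Fin n) (Fin n) ℂ) - Matrix.diagonal κ) - h • Matrix.diagonal κ) := by
    ext i j
    rw [Matrix.neg_apply, Mentry]
    simp only [hY, Matrix.of_apply]
    by_cases hij : i = j
    · subst hij
      simp only [eq_self_iff_true, if_true]
      ring
    · simp only [if_neg hij]
      ring
  rw [step2, step3, Matrix.det_neg, Fintype.card_fin]



def EEp (n : ℕ) (κ : Fin n → ℂ) : Matrix (Fin n) (Fin n) ℂ[X] :=
  Matrix.of fun i k =>
    if i = k then ∑ t ∈ Finset.univ.erase i, (C (κ i) + X) * C (κ i - κ t)⁻¹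
    else (C (κ i) + X) * C (dd n κ i) * C (((κ i - κ k) * dd n κ k)⁻¹)

def BBp (n : ℕ) (κ xv : Fin n → ℂ) (h u : ℂ) : Matrix (Fin n) (Fin n) ℂ[X] :=
  Matrix.of fun i j => (if i = j then C (bb n xv h u i) else 0) + C h * EEp n κ i j

def HTp (n : ℕ) (κ xv : Fin n → ℂ) (h u x : ℂ) : Matrix (Fin n) (Fin n) ℂ[X] :=
  Matrix.of fun i j => (if i = j then C (h * x) else 0) - BBp n κ xv h u j i * (C (x - κ j) - X)

def CMp (n : ℕ) (κ xv : Fin n → ℂ) (h : ℂ) : Matrix (Fin n) (Fin n) ℂ[X] :=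
  Matrix.of fun i j =>
    if i = j then
      C (xv i) - C h * (∑ k ∈ Finset.univ.filter (fun k : Fin n => k < i),
          (C (κ i) + X) * C (κ i - κ k)⁻¹)
        - C h * (∑ k ∈ Finset.univ.filter (fun k : Fin n => i < k),
          (C (κ k) + X) * C (κ i - κ k)⁻¹)
    else C h * (C (κ i) + X) * C (κ i - κ j)⁻¹

def Mp (n : ℕ) (κ xv : Fin n → ℂ) (h u x : ℂ) : Matrix (Fin n) (Fin n) ℂ[X] :=
  Matrix.of fun i j =>
    ((if i = j then C u else 0) - CMp n κ xv h i j) * (C (x - κ j) - X)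
      - (if i = j then C h * (C (κ j) + X) else 0)

lemma dd_shift (n : ℕ) (κ : Fin n → ℂ) (t : ℂ) (i : Fin n) :
    dd n (fun j => κ j + t) i = dd n κ i := by
  unfold dd
  exact Finset.prod_congr rfl fun s _ => by ring

lemma evalEEp (n : ℕ) (κ : Fin n → ℂ) (t : ℂ) (i k : Fin n) :
    eval t (EEp n κ i k) = EE n (fun j => κ j + t) i k := by
  have hterm : ∀ a b : Fin n, (κ a + t) / ((κ a + t) - (κ b + t)) = (κ a + t) * (κ a - κ b)⁻¹ :=
    fun a b => by rw [add_sub_add_right_eq_sub, div_eq_mul_inv]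
  by_cases hik : i = k
  · subst hik
    simp only [EEp, EE, Matrix.of_apply, eq_self_iff_true, if_true, eval_finset_sum,
      eval_mul, eval_add, eval_C, eval_X, dd_shift, hterm]
  · simp only [EEp, EE, Matrix.of_apply, if_neg hik, eval_mul, eval_add, eval_C, eval_X,
      dd_shift]
    rw [add_sub_add_right_eq_sub, div_eq_mul_inv]
    try ring

lemma evalHTp (n : ℕ) (κ xv : Fin n → ℂ) (h u x : ℂ) (t : ℂ) :
    (HTp n κ xv h u x).map (eval t) = HT n (fun j => κ j + t) xv h u x := by
  ext i j
  simp only [HTp, HT, BBp, BB, Matrix.map_apply, Matrix.of_apply, eval_sub, eval_mul, eval_add,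
    eval_C, eval_X, apply_ite (eval t), eval_zero, evalEEp]
  ring

lemma evalCMp (n : ℕ) (κ xv : Fin n → ℂ) (h : ℂ) (t : ℂ) (i j : Fin n) :
    eval t (CMp n κ xv h i j) = CM n (fun s => κ s + t) xv h i j := by
  have hterm : ∀ a b : Fin n, (κ a + t) / ((κ a + t) - (κ b + t)) = (κ a + t) * (κ a - κ b)⁻¹ :=
    fun a b => by rw [add_sub_add_right_eq_sub, div_eq_mul_inv]
  have hterm2 : ∀ a b c : Fin n, (κ a + t) / ((κ b + t) - (κ c + t)) = (κ a + t) * (κ b - κ c)⁻¹ :=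
    fun a b c => by rw [add_sub_add_right_eq_sub, div_eq_mul_inv]
  by_cases hij : i = j
  · subst hij
    simp only [CMp, CM, Matrix.of_apply, eq_self_iff_true, if_true, eval_sub, eval_mul, eval_C,
      eval_finset_sum, eval_add, eval_X, hterm, hterm2]
  · simp only [CMp, CM, Matrix.of_apply, if_neg hij, eval_mul, eval_add, eval_C, eval_X]
    rw [add_sub_add_right_eq_sub, mul_div_assoc, div_eq_mul_inv]
    try ring

lemma evalMp (n : ℕ) (κ xv : Fin n → ℂ) (h u x : ℂ) (t : ℂ) :
    (Mp n κ xv h u x).map (eval t) =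
      (u • (1 : Matrix (Fin n) (Fin n) ℂ) - CM n (fun s => κ s + t) xv h) *
          (x • (1 : Matrix (Fin n) (Fin n) ℂ) - Matrix.diagonal (fun s => κ s + t))
        - h • Matrix.diagonal (fun s => κ s + t) := by
  ext i j
  rw [Matrix.map_apply, Mentry]
  simp only [Mp, Matrix.of_apply, eval_sub, eval_mul, eval_add, eval_C, eval_X,
    apply_ite (eval t), eval_zero, evalCMp]
  ring

lemma keydet (n : ℕ) (κ xv : Fin n → ℂ) (h u x : ℂ) (hκ : Function.Injective κ) :
    (HT n κ xv h u x).det = (-1 : ℂ) ^ n *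
      ((u • (1 : Matrix (Fin n) (Fin n) ℂ) - CM n κ xv h) *
          (x • (1 : Matrix (Fin n) (Fin n) ℂ) - Matrix.diagonal κ)
        - h • Matrix.diagonal κ).det := by
  set p : ℂ[X] := (HTp n κ xv h u x).det - C ((-1 : ℂ) ^ n) * (Mp n κ xv h u x).det with hp
  have heval : ∀ t : ℂ, eval t p = (HT n (fun j => κ j + t) xv h u x).det - (-1 : ℂ) ^ n *
      ((u • (1 : Matrix (Fin n) (Fin n) ℂ) - CM n (fun s => κ s + t) xv h) *
          (x • (1 : Matrix (Fin n) (Fin n) ℂ) - Matrix.diagonal (fun s => κ s + t))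
        - h • Matrix.diagonal (fun s => κ s + t)).det := by
    intro t
    have e1 : eval t ((HTp n κ xv h u x).det) = (HT n (fun j => κ j + t) xv h u x).det := by
      have := RingHom.map_det (evalRingHom t) (HTp n κ xv h u x)
      simp only [coe_evalRingHom, RingHom.mapMatrix_apply] at this
      rw [this, evalHTp]
    have e2 : eval t ((Mp n κ xv h u x).det) =
        ((u • (1 : Matrix (Fin n) (Fin n) ℂ) - CM n (fun s => κ s + t) xv h) *
          (x • (1 : Matrix (Fin n) (Fin n) ℂ) - Matrix.diagonal (fun s => κ s + t))
        - h • Matrix.diagonal (fun s => κ s + t)).det := by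
      have := RingHom.map_det (evalRingHom t) (Mp n κ xv h u x)
      simp only [coe_evalRingHom, RingHom.mapMatrix_apply] at this
      rw [this, evalMp]
    rw [hp, eval_sub, eval_mul, eval_C, e1, e2]
  have hroot : ∀ t : ℂ, (∀ i, κ i + t ≠ 0) → p.IsRoot t := by
    intro t ht
    have hinj : Function.Injective (fun j => κ j + t) := by
      intro a b hab
      exact hκ (by simpa using hab)
    have h1 := keydet0 n (fun j => κ j + t) xv h u x hinj ht
    rw [Polynomial.IsRoot, heval t, h1, sub_self]
  have hinf : Set.Infinite {t : ℂ | p.IsRoot t} := by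
    have hfin : (Set.range (fun i : Fin n => -κ i)).Finite := Set.finite_range _
    refine Set.Infinite.mono ?_ hfin.infinite_compl
    intro t htc
    refine hroot t fun i => ?_
    intro hzero
    exact htc ⟨i, by linear_combination -hzero⟩
  have hp0 : p = 0 := Polynomial.eq_zero_of_infinite_isRoot p hinf
  have h0 := heval 0
  rw [hp0, eval_zero] at h0
  have hκ0 : (fun j => κ j + (0 : ℂ)) = κ := funext fun j => add_zero _
  rw [hκ0] at h0
  exact sub_eq_zero.mp h0.symm

/-- for pairwise distinct `κ_1,…,κ_n`,
`Ŵ^κ(u,x) = det((u·1 − C)(x·1 − Q) − hQ) · ∏_{i<j} (κ_i − κ_j)`,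
where `Q = diag(κ_1,…,κ_n)`. -/
theorem statement18 (n : ℕ) (κ xv : Fin n → ℂ) (h u x : ℂ)
    (hκ : Function.Injective κ) :
    (What n κ xv h u x).det =
      ((u • (1 : Matrix (Fin n) (Fin n) ℂ) - CM n κ xv h) *
          (x • (1 : Matrix (Fin n) (Fin n) ℂ) - Matrix.diagonal κ)
        - h • Matrix.diagonal κ).det *
        ∏ p ∈ Finset.univ.filter (fun p : Fin n × Fin n => p.1 < p.2), (κ p.1 - κ p.2) := by
  rw [what_det n κ xv h u x hκ, keydet n κ xv h u x hκ]
  rw [← mul_assoc, ← mul_pow]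
  norm_num

end GRTV
end
end
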